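/- Let G = (V,E) be a hypergraph with G = cl(G), and let C = e_1, e_2, e_3, e_1 be an α-cycle of G satisfying e_1 \ (e_2 ∪ e_3) = ∅, e_2 \ (e_1 ∪ e_3) = ∅, and e_3 \ (e_1 ∪ e_2) = ∅. Then every point z ∈ CER(G) satisfies 2 z_{e_1∩e_2} − 2 z_{e_1} − 2 z_{e_2} + 2 z_{e_3} ≥ −1; consequently the generalized triangle inequality z_{e_1} + z_{e_2} ≤ z_{e_1∩e_2} + z_{e_3} is a Chvátal–Gomory cut for CER(G). -/

import Mathlib

open Finset

namespace BPO

variable {N : Type*} [DecidableEq N]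

/-- Coordinate index set of `ℝ^{V ∪ E}`: one coordinate for each edge, and one
coordinate (labelled by the corresponding singleton) for each node. -/
def coords (V : Finset N) (E : Finset (Finset N)) : Finset (Finset N) :=
  E ∪ V.image fun v => {v}

/-- A point of `ℝ^{V ∪ E}`. -/
abbrev Pt (V : Finset N) (E : Finset (Finset N)) : Type _ :=
  {p : Finset N // p ∈ coords V E} → ℝ

/-- Evaluate a coordinate of a point, with the convention `z_∅ = 1`.
For a node `v`, the coordinate `z_v` is `ev z {v}`. -/
noncomputable def ev {V : Finset N} {E : Finset (Finset N)} (z : Pt V E)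
    (p : Finset N) : ℝ :=
  if h : p ∈ coords V E then z ⟨p, h⟩ else if p = ∅ then 1 else 0

/-- The multilinear set `S(G)`: binary points with `z_e = ∏_{v ∈ e} z_v`. -/
def mlSet (V : Finset N) (E : Finset (Finset N)) : Set (Pt V E) :=
  { z | (∀ p, z p = 0 ∨ z p = 1) ∧ ∀ e ∈ E, ev z e = ∏ v ∈ e, ev z {v} }

/-- The multilinear polytope `MP(G)`. -/
noncomputable def MP (V : Finset N) (E : Finset (Finset N)) : Set (Pt V E) :=
  convexHull ℝ (mlSet V E)

/-- The completion `cl(E) = { f ⊆ e : |f| ≥ 2, e ∈ E }`. -/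
def clE (E : Finset (Finset N)) : Finset (Finset N) :=
  (E.biUnion Finset.powerset).filter fun g => 2 ≤ g.card

/-- The set of maximal edges of `E`. -/
def maxEdges (E : Finset (Finset N)) : Finset (Finset N) :=
  E.filter fun e => ∀ e' ∈ E, e ⊆ e' → e = e'

/-- The linear function `ψ(U, e)`. -/
noncomputable def psi {V : Finset N} {E : Finset (Finset N)} (z : Pt V E)
    (U e : Finset N) : ℝ :=
  ∑ W ∈ U.powerset, (if Even W.card then (1 : ℝ) else -1) * ev z ((e \ U) ∪ W)

/-- The complete edge relaxation constraints (`ψ(U,e) ≥ 0` for `U ⊆ e`, `e` a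
maximal edge of `E`), imposed on the coordinate space `ℝ^{V ∪ F}`. -/
noncomputable def cerSet (V : Finset N) (E F : Finset (Finset N)) : Set (Pt V F) :=
  { z | ∀ e ∈ maxEdges E, ∀ U ⊆ e, 0 ≤ psi z U e }

/-- The complete edge relaxation `CER(G) ⊆ ℝ^{V ∪ cl(E)}`. -/
noncomputable def CER (V : Finset N) (E : Finset (Finset N)) : Set (Pt V (clE E)) :=
  cerSet V E (clE E)

/-- Projection onto the coordinates of `ℝ^{V₂ ∪ E₂}`. -/
noncomputable def res (V₂ : Finset N) (E₂ : Finset (Finset N)) {V₁ : Finset N}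
    {E₁ : Finset (Finset N)} (z : Pt V₁ E₁) : Pt V₂ E₂ :=
  fun p => ev z p.1

/-- `CER(G)` is an extension of `MP(G)`: `MP(G)` is the image of `CER(G)` under
the projection of `ℝ^{V ∪ cl(E)}` onto `ℝ^{V ∪ E}`. -/
def IsExtension (V : Finset N) (E : Finset (Finset N)) : Prop :=
  MP V E = (fun z : Pt V (clE E) => res V E z) '' CER V E

/-- The running intersection property for the family `E`. -/
def RunningIntersection (E : Finset (Finset N)) : Prop :=
  ∃ L : List (Finset N), L.Nodup ∧ L.toFinset = E ∧
    ∀ k, 0 < k → k < L.length →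
      ∃ j < k, L.getD k ∅ ∩ (L.take k).foldr (· ∪ ·) ∅ ⊆ L.getD j ∅

/-- A hypergraph is α-acyclic if its edge set has the running intersection property. -/
def AlphaAcyclic (E : Finset (Finset N)) : Prop := RunningIntersection E

/-- `s_i = e_i ∩ e_{i+1}` for a cyclic sequence `e_1, …, e_ℓ, e_{ℓ+1} = e_1`. -/
def cycS (c : ℕ → Finset N) (ℓ i : ℕ) : Finset N :=
  c i ∩ c (if i = ℓ then 1 else i + 1)

/-- A simple cycle `e_1, …, e_ℓ, e_{ℓ+1} = e_1` of length `ℓ`. -/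
def IsSimpleCycle (E : Finset (Finset N)) (ℓ : ℕ) (c : ℕ → Finset N) : Prop :=
  3 ≤ ℓ ∧ (∀ i, 1 ≤ i → i ≤ ℓ → c i ∈ E) ∧
    ∀ i j k, 1 ≤ i → i < j → j < k → k ≤ ℓ → ∀ e ∈ E,
      ((cycS c ℓ i ∪ cycS c ℓ j ∪ cycS c ℓ k) \ e).Nonempty

/-- An α-cycle `e_1, …, e_ℓ, e_{ℓ+1} = e_1` of length `ℓ`. -/
def IsAlphaCycle (E : Finset (Finset N)) (ℓ : ℕ) (c : ℕ → Finset N) : Prop :=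
  3 ≤ ℓ ∧ (∀ i, 1 ≤ i → i ≤ ℓ → c i ∈ E) ∧
    (∀ i j, 1 ≤ i → i ≤ ℓ → 1 ≤ j → j ≤ ℓ → i ≠ j → (c i \ c j).Nonempty) ∧
    ∀ i, 1 ≤ i → i ≤ ℓ → ∀ e ∈ E,
      ((cycS c ℓ (if i = 1 then ℓ else i - 1) ∪ cycS c ℓ i ∪
        cycS c ℓ (if i = ℓ then 1 else i + 1)) \ e).Nonempty

/-- A chordless α-cycle: no subsequence `e_i, …, e_j, ẽ, e_i` is an α-cycle. -/
def Chordless (E : Finset (Finset N)) (ℓ : ℕ) (c : ℕ → Finset N) : Prop :=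
  ∀ i j, 1 ≤ i → i < j → j ≤ ℓ → j - i ≤ ℓ - 3 →
    ∀ g ∈ E, (∀ k, i ≤ k → k ≤ j → g ≠ c k) →
      ¬ IsAlphaCycle E (j - i + 2) fun k => if k ≤ j - i + 1 then c (i + k - 1) else g

/-- The edge set `E_{V'}` of the subhypergraph induced by `W`. -/
def indE (E : Finset (Finset N)) (W : Finset N) : Finset (Finset N) :=
  (E.image fun e => e ∩ W).filter fun g => 2 ≤ g.card

/-- The edge set `E_{w→u}` obtained by contracting `w` to `u`. -/
def contrE (E : Finset (Finset N)) (u w : N) : Finset (Finset N) :=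
  E.filter (fun e => w ∉ e) ∪
    (E.filter fun e => w ∈ e ∧ e ≠ {u, w}).image fun e => e.erase w ∪ {u}

/-- The edge set `E'` obtained by expanding `w` to `f`. -/
def expE (E : Finset (Finset N)) (w : N) (f : Finset N) : Finset (Finset N) :=
  insert f
    (E.filter (fun e => w ∉ e) ∪ (E.filter fun e => w ∈ e).image fun e => e.erase w ∪ f)

/-- The coordinate renaming `x_w → z_f`, `x_v → z_v`, `x_e → z_e` (`w ∉ e`),
`x_e → z_{(e∖{w}) ⊎ f}` (`w ∈ e`) used in the expansion operation. -/
def expRen (w : N) (f : Finset N) (p : Finset N) : Finset N :=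
  if p = {w} then f else if w ∈ p then p.erase w ∪ f else p

lemma sum_powerset_sign (S : Finset N) :
    ∑ W ∈ S.powerset, (if Even W.card then (1:ℝ) else -1) = if S = ∅ then 1 else 0 := by
  have key : ∑ W ∈ S.powerset, (if Even W.card then (1:ℝ) else -1)
      = ((∑ W ∈ S.powerset, (-1 : ℤ) ^ W.card : ℤ) : ℝ) := by
    push_cast
    refine Finset.sum_congr rfl fun W _ => ?_
    rcases Nat.even_or_odd W.card with h | h
    · rw [if_pos h, h.neg_one_pow]
    · rw [if_neg (Nat.not_even_iff_odd.mpr h), h.neg_one_pow]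
  rw [key, Finset.sum_powerset_neg_one_pow_card]
  split_ifs <;> norm_num

lemma sum_powerset_pairs (T : Finset N) (f : Finset N → Finset N → ℝ) :
    ∑ U ∈ T.powerset, ∑ W ∈ U.powerset, f (U \ W) W
      = ∑ A ∈ T.powerset, ∑ W ∈ (T \ A).powerset, f A W := by
  rw [Finset.sum_sigma', Finset.sum_sigma']
  refine Finset.sum_nbij' (fun x => ⟨x.1 \ x.2, x.2⟩) (fun x => ⟨x.1 ∪ x.2, x.2⟩)
    ?_ ?_ ?_ ?_ ?_
  · rintro ⟨U, W⟩ ha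
    simp only [Finset.mem_sigma, Finset.mem_powerset] at ha ⊢
    obtain ⟨hU, hW⟩ := ha
    refine ⟨(Finset.sdiff_subset).trans hU, fun x hx => ?_⟩
    simp only [Finset.mem_sdiff]
    exact ⟨hU (hW hx), fun hc => hc.2 hx⟩
  · rintro ⟨A, W⟩ ha
    simp only [Finset.mem_sigma, Finset.mem_powerset] at ha ⊢
    obtain ⟨hA, hW⟩ := ha
    exact ⟨Finset.union_subset hA ((hW.trans Finset.sdiff_subset)),
      Finset.subset_union_right⟩
  · rintro ⟨U, W⟩ ha
    simp only [Finset.mem_sigma, Finset.mem_powerset] at ha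
    show (⟨(U \ W) ∪ W, W⟩ : Σ _ : Finset N, Finset N) = ⟨U, W⟩
    rw [Finset.sdiff_union_of_subset ha.2]
  · rintro ⟨A, W⟩ ha
    simp only [Finset.mem_sigma, Finset.mem_powerset] at ha
    show (⟨(A ∪ W) \ W, W⟩ : Σ _ : Finset N, Finset N) = ⟨A, W⟩
    rw [Finset.union_sdiff_cancel_right (Finset.disjoint_left.mpr
      fun x hx hc => (Finset.mem_sdiff.mp (ha.2 hc)).2 hx)]
  · rintro ⟨U, W⟩ _
    rfl

lemma ev_eq_sum_psi {V : Finset N} {F : Finset (Finset N)} (z : Pt V F) {e f : Finset N}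
    (hf : f ⊆ e) :
    ev z f = ∑ U ∈ (e \ f).powerset, psi z U e := by
  have hrw : ∀ U ∈ (e \ f).powerset, psi z U e
      = ∑ W ∈ U.powerset, (fun A W => (if Even W.card then (1:ℝ) else -1) * ev z (e \ A)) (U \ W) W := by
    intro U hU
    rw [Finset.mem_powerset] at hU
    have hUe : U ⊆ e := hU.trans Finset.sdiff_subset
    refine Finset.sum_congr rfl fun W hW => ?_
    rw [Finset.mem_powerset] at hW
    have : (e \ U) ∪ W = e \ (U \ W) := by
      ext a
      simp only [Finset.mem_union, Finset.mem_sdiff]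
      have h1 : a ∈ W → a ∈ U := fun h => hW h
      have h2 : a ∈ U → a ∈ e := fun h => hUe h
      tauto
    rw [this]
  have hswap := sum_powerset_pairs (e \ f)
    (fun A W => (if Even W.card then (1:ℝ) else -1) * ev z (e \ A))
  rw [Finset.sum_congr rfl hrw, hswap]
  have : ∀ A ∈ (e \ f).powerset,
      ∑ W ∈ ((e \ f) \ A).powerset, (if Even W.card then (1:ℝ) else -1) * ev z (e \ A)
        = (if (e \ f) \ A = ∅ then 1 else 0) * ev z (e \ A) := by
    intro A _
    rw [← Finset.sum_mul, sum_powerset_sign]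
  rw [Finset.sum_congr rfl this, Finset.sum_eq_single (e \ f)]
  · simp [Finset.sdiff_sdiff_self_left, Finset.inter_eq_right.mpr hf]
  · intro A hA hne
    rw [Finset.mem_powerset] at hA
    rw [if_neg, zero_mul]
    intro hc
    exact hne (Finset.Subset.antisymm hA (Finset.sdiff_eq_empty_iff_subset.mp hc))
  · intro h
    exact absurd (Finset.mem_powerset.mpr (Finset.Subset.refl _)) h

lemma ev_nonneg {V : Finset N} {F : Finset (Finset N)} (z : Pt V F) {e f : Finset N}
    (hpsi : ∀ U ⊆ e, 0 ≤ psi z U e) (hf : f ⊆ e) : 0 ≤ ev z f := by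
  rw [ev_eq_sum_psi z hf]
  exact Finset.sum_nonneg fun U hU =>
    hpsi U ((Finset.mem_powerset.mp hU).trans Finset.sdiff_subset)

lemma ev_mono {V : Finset N} {F : Finset (Finset N)} (z : Pt V F) {e f g : Finset N}
    (hpsi : ∀ U ⊆ e, 0 ≤ psi z U e) (hfg : f ⊆ g) (hg : g ⊆ e) : ev z g ≤ ev z f := by
  rw [ev_eq_sum_psi z (hfg.trans hg), ev_eq_sum_psi z hg]
  refine Finset.sum_le_sum_of_subset_of_nonneg
    (Finset.powerset_mono.mpr (Finset.sdiff_subset_sdiff (Finset.Subset.refl e) hfg)) ?_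
  intro U hU _
  exact hpsi U ((Finset.mem_powerset.mp hU).trans Finset.sdiff_subset)

lemma ev_superadd {V : Finset N} {F : Finset (Finset N)} (z : Pt V F) {e f g : Finset N}
    (hpsi : ∀ U ⊆ e, 0 ≤ psi z U e) (hf : f ⊆ e) (hg : g ⊆ e)
    (hempty : ev z ∅ = (1:ℝ)) : ev z f + ev z g ≤ ev z (f ∪ g) + 1 := by
  rw [ev_eq_sum_psi z hf, ev_eq_sum_psi z hg,
    ev_eq_sum_psi z (Finset.union_subset hf hg), ← hempty,
    ev_eq_sum_psi z (Finset.empty_subset e), Finset.sdiff_empty]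
  have hinter : (e \ f).powerset ∩ (e \ g).powerset = (e \ (f ∪ g)).powerset := by
    ext U
    simp only [Finset.mem_inter, Finset.mem_powerset, Finset.sdiff_union_distrib,
      Finset.subset_inter_iff]
  have hnn : ∀ U ∈ e.powerset, 0 ≤ psi z U e := fun U hU =>
    hpsi U (Finset.mem_powerset.mp hU)
  calc ∑ U ∈ (e \ f).powerset, psi z U e + ∑ U ∈ (e \ g).powerset, psi z U e
      = ∑ U ∈ (e \ f).powerset ∪ (e \ g).powerset, psi z U e
        + ∑ U ∈ (e \ f).powerset ∩ (e \ g).powerset, psi z U e :=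
        (Finset.sum_union_inter).symm
    _ ≤ ∑ U ∈ e.powerset, psi z U e + ∑ U ∈ (e \ (f ∪ g)).powerset, psi z U e := by
        rw [hinter]
        refine add_le_add_left (Finset.sum_le_sum_of_subset_of_nonneg ?_
          fun U hU _ => hnn U hU) _
        refine Finset.union_subset ?_ ?_ <;>
          exact Finset.powerset_mono.mpr Finset.sdiff_subset
    _ = ∑ U ∈ (e \ (f ∪ g)).powerset, psi z U e + ∑ U ∈ e.powerset, psi z U e := by ring

lemma exists_maxEdge {E : Finset (Finset N)} {e : Finset N} (he : e ∈ E) :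
    ∃ m ∈ maxEdges E, e ⊆ m := by
  obtain ⟨m, hm, hmax⟩ := Finset.exists_max_image (E.filter (e ⊆ ·)) Finset.card
    ⟨e, Finset.mem_filter.mpr ⟨he, Finset.Subset.refl e⟩⟩
  rw [Finset.mem_filter] at hm
  refine ⟨m, Finset.mem_filter.mpr ⟨hm.1, fun e' he' hme' => ?_⟩, hm.2⟩
  have he'mem : e' ∈ E.filter (e ⊆ ·) :=
    Finset.mem_filter.mpr ⟨he', hm.2.trans hme'⟩
  exact Finset.eq_of_subset_of_card_le hme' (hmax e' he'mem)

theorem stmt19 {N : Type*} [DecidableEq N] (V : Finset N) (E : Finset (Finset N))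
    (hcard : ∀ e ∈ E, 2 ≤ e.card) (hVsub : ∀ e ∈ E, e ⊆ V)
    (hcover : ∀ v ∈ V, ∃ e ∈ E, v ∈ e)
    (hcl : clE E = E)
    (e1 e2 e3 : Finset N) (h1 : e1 ∈ E) (h2 : e2 ∈ E) (h3 : e3 ∈ E)
    (hd12 : (e1 \ e2).Nonempty) (hd21 : (e2 \ e1).Nonempty)
    (hd13 : (e1 \ e3).Nonempty) (hd31 : (e3 \ e1).Nonempty)
    (hd23 : (e2 \ e3).Nonempty) (hd32 : (e3 \ e2).Nonempty)
    (halpha : ∀ e ∈ E, (((e1 ∩ e2) ∪ (e2 ∩ e3) ∪ (e1 ∩ e3)) \ e).Nonempty)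
    (hw1 : e1 \ (e2 ∪ e3) = ∅) (hw2 : e2 \ (e1 ∪ e3) = ∅)
    (hw3 : e3 \ (e1 ∪ e2) = ∅) :
    (∀ z ∈ CER V E,
      -1 ≤ 2 * ev z (e1 ∩ e2) - 2 * ev z e1 - 2 * ev z e2 + 2 * ev z e3) ∧
    ∃ β : ℝ, Int.floor β = 0 ∧ ∀ z ∈ CER V E,
      ev z e1 + ev z e2 - ev z (e1 ∩ e2) - ev z e3 ≤ β := by

  classical
  have hempty : ∀ z : Pt V (clE E), ev z ∅ = 1 := by
    intro z
    have hne : (∅ : Finset N) ∉ coords V (clE E) := by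
      intro hmem
      rcases Finset.mem_union.mp hmem with h | h
      · simp [clE] at h
      · obtain ⟨v, _, hv⟩ := Finset.mem_image.mp h
        exact Finset.singleton_ne_empty v hv
    unfold ev
    rw [dif_neg hne, if_pos rfl]
  have he1 : e1 = (e1 ∩ e2) ∪ (e1 ∩ e3) := by
    have hsub : e1 ⊆ e2 ∪ e3 := Finset.sdiff_eq_empty_iff_subset.mp hw1
    rw [← Finset.inter_union_distrib_left, Finset.inter_eq_left.mpr hsub]
  have he3 : e3 = (e2 ∩ e3) ∪ (e1 ∩ e3) := by
    have hsub : e3 ⊆ e2 ∪ e1 := by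
      rw [Finset.union_comm]; exact Finset.sdiff_eq_empty_iff_subset.mp hw3
    rw [Finset.inter_comm e2 e3, Finset.inter_comm e1 e3,
      ← Finset.inter_union_distrib_left, Finset.inter_eq_left.mpr hsub]
  have main : ∀ z ∈ CER V E,
      -1 ≤ 2 * ev z (e1 ∩ e2) - 2 * ev z e1 - 2 * ev z e2 + 2 * ev z e3 := by
    intro z hz
    have hz' : ∀ e ∈ maxEdges E, ∀ U ⊆ e, 0 ≤ psi z U e := hz
    obtain ⟨m1, hm1, hsub1⟩ := exists_maxEdge h1
    obtain ⟨m2, hm2, hsub2⟩ := exists_maxEdge h2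
    obtain ⟨m3, hm3, hsub3⟩ := exists_maxEdge h3
    have hpsi1 := hz' m1 hm1
    have hpsi2 := hz' m2 hm2
    have hpsi3 := hz' m3 hm3
    have f1 : ev z e1 ≤ ev z (e1 ∩ e2) := ev_mono z hpsi1 Finset.inter_subset_left hsub1
    have f2 : ev z e1 ≤ ev z (e1 ∩ e3) := ev_mono z hpsi1 Finset.inter_subset_left hsub1
    have f3 : ev z e2 ≤ ev z (e1 ∩ e2) := ev_mono z hpsi2 Finset.inter_subset_right hsub2
    have f4 : ev z e2 ≤ ev z (e2 ∩ e3) := ev_mono z hpsi2 Finset.inter_subset_left hsub2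
    have f5 : 0 ≤ ev z e3 := ev_nonneg z hpsi3 hsub3
    have f6 : ev z (e2 ∩ e3) + ev z (e1 ∩ e3) ≤ ev z ((e2 ∩ e3) ∪ (e1 ∩ e3)) + 1 :=
      ev_superadd z hpsi3 (Finset.inter_subset_right.trans hsub3)
        (Finset.inter_subset_right.trans hsub3) (hempty z)
    rw [← he3] at f6
    linarith
  refine ⟨main, 1/2, ?_, fun z hz => ?_⟩
  · rw [Int.floor_eq_zero_iff]
    constructor <;> norm_num
  · have := main z hz
    linarith


end BPO
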